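/- For the 2-lag factorizable Gibbs distribution π, the conditional distribution of the past given the future depends only on the two next values: for every t with 1 ≤ t ≤ T−2 and all z ∈ E^T, π(z₁,…,z_t ∣ z_{t+1},…,z_T) := π(z) / Σ_{u₁,…,u_t ∈ E} π(u₁,…,u_t, z_{t+1},…,z_T) equals exp U_t*(z₁,…,z_t; z_{t+1}, z_{t+2}) / Σ_{u₁,…,u_t ∈ E} exp U_t*(u₁,…,u_t; z_{t+1}, z_{t+2}), where U_t*(z₁,…,z_t; z_{t+1}, z_{t+2}) = U_t(z₁,…,z_t) + Ψ_{1,t}(z_t, z_{t+1}) + Ψ_{2,t−1}(z_{t−1}, z_{t+1}) + Ψ_{2,t}(z_t, z_{t+2}); in particular it depends on (z_{t+1},…,z_T) only through (z_{t+1}, z_{t+2}). -/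
import Mathlib

/-- Auxiliary: convert the `Fin`-indexed sums in the energy to `Finset.range` sums
over an extension `ξ : ℕ → E` of the configuration. -/
lemma two_lag_aux_sum {E : Type*} (θ : ℕ → E → ℝ) (Ψ₁ Ψ₂ : ℕ → E → E → ℝ)
    (n : ℕ) (w : Fin n → E) (ξ : ℕ → E) (hξ : ∀ k (h : k < n), ξ k = w ⟨k, h⟩) :
    ((∑ s : Fin n, θ (s.1 + 1) (w s))
      + (∑ s : Fin (n - 1), Ψ₁ (s.1 + 1) (w ⟨s.1, by have := s.2; omega⟩)
          (w ⟨s.1 + 1, by have := s.2; omega⟩))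
      + ∑ s : Fin (n - 2), Ψ₂ (s.1 + 1) (w ⟨s.1, by have := s.2; omega⟩)
          (w ⟨s.1 + 2, by have := s.2; omega⟩))
    = (∑ s ∈ Finset.range n, θ (s + 1) (ξ s))
      + (∑ s ∈ Finset.range (n - 1), Ψ₁ (s + 1) (ξ s) (ξ (s + 1)))
      + ∑ s ∈ Finset.range (n - 2), Ψ₂ (s + 1) (ξ s) (ξ (s + 2)) := by
  have h1 : (∑ s : Fin n, θ (s.1 + 1) (w s)) = ∑ s ∈ Finset.range n, θ (s + 1) (ξ s) := by
    rw [← Fin.sum_univ_eq_sum_range (fun s => θ (s + 1) (ξ s)) n]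
    refine Finset.sum_congr rfl fun s _ => ?_
    rw [hξ s.1 s.2]
  have h2 : (∑ s : Fin (n - 1), Ψ₁ (s.1 + 1) (w ⟨s.1, by have := s.2; omega⟩)
          (w ⟨s.1 + 1, by have := s.2; omega⟩))
      = ∑ s ∈ Finset.range (n - 1), Ψ₁ (s + 1) (ξ s) (ξ (s + 1)) := by
    rw [← Fin.sum_univ_eq_sum_range (fun s => Ψ₁ (s + 1) (ξ s) (ξ (s + 1))) (n - 1)]
    refine Finset.sum_congr rfl fun s _ => ?_
    rw [hξ s.1 (by have := s.2; omega), hξ (s.1 + 1) (by have := s.2; omega)]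
  have h3 : (∑ s : Fin (n - 2), Ψ₂ (s.1 + 1) (w ⟨s.1, by have := s.2; omega⟩)
          (w ⟨s.1 + 2, by have := s.2; omega⟩))
      = ∑ s ∈ Finset.range (n - 2), Ψ₂ (s + 1) (ξ s) (ξ (s + 2)) := by
    rw [← Fin.sum_univ_eq_sum_range (fun s => Ψ₂ (s + 1) (ξ s) (ξ (s + 2))) (n - 2)]
    refine Finset.sum_congr rfl fun s _ => ?_
    rw [hξ s.1 (by have := s.2; omega), hξ (s.1 + 2) (by have := s.2; omega)]
  rw [h1, h2, h3]

/-- Auxiliary: absorbing the three extra potential terms of `U*` into the range sums. -/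
lemma two_lag_aux_join {E : Type*} (θ : ℕ → E → ℝ) (Ψ₁ Ψ₂ : ℕ → E → E → ℝ)
    (hΨ₂0 : ∀ u v, Ψ₂ 0 u v = 0) (t : ℕ) (ht : 1 ≤ t) (ξ : ℕ → E) :
    ((∑ s ∈ Finset.range t, θ (s + 1) (ξ s))
      + (∑ s ∈ Finset.range (t - 1), Ψ₁ (s + 1) (ξ s) (ξ (s + 1)))
      + ∑ s ∈ Finset.range (t - 2), Ψ₂ (s + 1) (ξ s) (ξ (s + 2)))
      + Ψ₁ t (ξ (t - 1)) (ξ t) + Ψ₂ (t - 1) (ξ (t - 2)) (ξ t)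
      + Ψ₂ t (ξ (t - 1)) (ξ (t + 1))
    = (∑ s ∈ Finset.range t, θ (s + 1) (ξ s))
      + (∑ s ∈ Finset.range t, Ψ₁ (s + 1) (ξ s) (ξ (s + 1)))
      + ∑ s ∈ Finset.range t, Ψ₂ (s + 1) (ξ s) (ξ (s + 2)) := by
  obtain ⟨m, rfl⟩ : ∃ m, t = m + 1 := ⟨t - 1, by omega⟩
  have hm2 : m + 1 - 2 = m - 1 := by omega
  rw [Nat.add_sub_cancel, hm2,
    Finset.sum_range_succ (fun s => Ψ₁ (s + 1) (ξ s) (ξ (s + 1))) m,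
    Finset.sum_range_succ (fun s => Ψ₂ (s + 1) (ξ s) (ξ (s + 2))) m]
  rcases m with _ | k
  · simp [hΨ₂0]
  · rw [Nat.add_sub_cancel,
      Finset.sum_range_succ (fun s => Ψ₂ (s + 1) (ξ s) (ξ (s + 2))) k]
    ring

/-- For the 2-lag factorizable Gibbs distribution `π` with energy
`U_T(z) = ∑_{s=1}^{T} θ_s(z_s) + ∑_{s=1}^{T-1} Ψ_{1,s}(z_s,z_{s+1})
  + ∑_{s=1}^{T-2} Ψ_{2,s}(z_s,z_{s+2})`,
the conditional distribution of the past given the future depends only on the two next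
values: for `1 ≤ t ≤ T-2`,
`π(z₁,…,z_t ∣ z_{t+1},…,z_T) = exp U_t*(z₁,…,z_t; z_{t+1},z_{t+2})
  / ∑_{u₁,…,u_t} exp U_t*(u₁,…,u_t; z_{t+1},z_{t+2})`, where
`U_t*(z₁,…,z_t; a, b) = U_t(z₁,…,z_t) + Ψ_{1,t}(z_t,a) + Ψ_{2,t-1}(z_{t-1},a) + Ψ_{2,t}(z_t,b)`,
with the convention `Ψ_{2,0} ≡ 0`.
(Potentials are indexed from `1` as in the paper; sites of configurations are indexed
from `0`, so `z ⟨k⟩` is the paper's `z_{k+1}`.) -/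
theorem two_lag_gibbs_past_given_future_conditional
    {E : Type*} [Fintype E] [Nonempty E]
    (T : ℕ) (hT : 3 ≤ T)
    (θ : ℕ → E → ℝ) (Ψ₁ Ψ₂ : ℕ → E → E → ℝ)
    (hΨ₂0 : ∀ u v, Ψ₂ 0 u v = 0)
    (U : (t : ℕ) → (Fin t → E) → ℝ)
    (hU : ∀ (t : ℕ) (z : Fin t → E),
      U t z = (∑ s : Fin t, θ (s.1 + 1) (z s))
        + (∑ s : Fin (t - 1),
            Ψ₁ (s.1 + 1) (z ⟨s.1, by have := s.2; omega⟩)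
              (z ⟨s.1 + 1, by have := s.2; omega⟩))
        + ∑ s : Fin (t - 2),
            Ψ₂ (s.1 + 1) (z ⟨s.1, by have := s.2; omega⟩)
              (z ⟨s.1 + 2, by have := s.2; omega⟩))
    (Ustar : (t : ℕ) → (Fin t → E) → E → E → ℝ)
    (hUstar : ∀ (t : ℕ) (ht : 1 ≤ t) (z : Fin t → E) (a b : E),
      Ustar t z a b = U t z + Ψ₁ t (z ⟨t - 1, by omega⟩) a
        + Ψ₂ (t - 1) (z ⟨t - 2, by omega⟩) a + Ψ₂ t (z ⟨t - 1, by omega⟩) b)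
    (C : ℝ) (hC : C = ∑ z : Fin T → E, Real.exp (U T z))
    (π : (Fin T → E) → ℝ) (hπ : ∀ z, π z = C⁻¹ * Real.exp (U T z)) :
    ∀ (t : ℕ) (ht1 : 1 ≤ t) (ht2 : t ≤ T - 2) (z : Fin T → E),
      π z / (∑ u : Fin t → E,
          π (fun j : Fin T => if hj : j.1 < t then u ⟨j.1, hj⟩ else z j))
      = Real.exp (Ustar t (fun j : Fin t => z ⟨j.1, by have := j.2; omega⟩)
            (z ⟨t, by omega⟩) (z ⟨t + 1, by omega⟩))
        / ∑ u : Fin t → E,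
            Real.exp (Ustar t u (z ⟨t, by omega⟩) (z ⟨t + 1, by omega⟩)) := by
  intro t ht1 ht2 z
  have h1 : t < T := by omega
  have h2 : t + 1 < T := by omega
  classical
  set ζ : ℕ → E := fun n => if h : n < T then z ⟨n, h⟩ else Classical.arbitrary E with hζdef
  have hζ : ∀ k (h : k < T), ζ k = z ⟨k, h⟩ := fun k h => dif_pos h
  -- splitting a range sum at t
  have hsplit : ∀ (n : ℕ), t ≤ n → ∀ (f : ℕ → ℝ),
      ∑ s ∈ Finset.range n, f s
        = (∑ s ∈ Finset.range t, f s) + ∑ s ∈ Finset.Ico t n, f s := by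
    intro n h f
    rw [Finset.range_eq_Ico, ← Finset.sum_Ico_consecutive f (Nat.zero_le t) h,
      ← Finset.range_eq_Ico]
  -- key decomposition of the full energy
  have key : ∀ (v : Fin T → E) (ξ : ℕ → E), (∀ k (h : k < T), ξ k = v ⟨k, h⟩) →
      U T v = Ustar t (fun j : Fin t => ξ j.1) (ξ t) (ξ (t + 1))
        + ((∑ s ∈ Finset.Ico t T, θ (s + 1) (ξ s))
          + (∑ s ∈ Finset.Ico t (T - 1), Ψ₁ (s + 1) (ξ s) (ξ (s + 1)))
          + ∑ s ∈ Finset.Ico t (T - 2), Ψ₂ (s + 1) (ξ s) (ξ (s + 2))) := by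
    intro v ξ hξ
    have hUT : U T v = (∑ s ∈ Finset.range T, θ (s + 1) (ξ s))
        + (∑ s ∈ Finset.range (T - 1), Ψ₁ (s + 1) (ξ s) (ξ (s + 1)))
        + ∑ s ∈ Finset.range (T - 2), Ψ₂ (s + 1) (ξ s) (ξ (s + 2)) := by
      rw [hU]; exact two_lag_aux_sum θ Ψ₁ Ψ₂ T v ξ hξ
    have hu : U t (fun j : Fin t => ξ j.1)
        = (∑ s ∈ Finset.range t, θ (s + 1) (ξ s))
          + (∑ s ∈ Finset.range (t - 1), Ψ₁ (s + 1) (ξ s) (ξ (s + 1)))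
          + ∑ s ∈ Finset.range (t - 2), Ψ₂ (s + 1) (ξ s) (ξ (s + 2)) := by
      rw [hU]; exact two_lag_aux_sum θ Ψ₁ Ψ₂ t _ ξ (fun k h => rfl)
    have hUst : Ustar t (fun j : Fin t => ξ j.1) (ξ t) (ξ (t + 1))
        = (∑ s ∈ Finset.range t, θ (s + 1) (ξ s))
          + (∑ s ∈ Finset.range t, Ψ₁ (s + 1) (ξ s) (ξ (s + 1)))
          + ∑ s ∈ Finset.range t, Ψ₂ (s + 1) (ξ s) (ξ (s + 2)) := by
      rw [hUstar t ht1, hu]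
      exact two_lag_aux_join θ Ψ₁ Ψ₂ hΨ₂0 t ht1 ξ
    rw [hUT, hUst, hsplit T (by omega) (fun s => θ (s + 1) (ξ s)),
      hsplit (T - 1) (by omega) (fun s => Ψ₁ (s + 1) (ξ s) (ξ (s + 1))),
      hsplit (T - 2) ht2 (fun s => Ψ₂ (s + 1) (ξ s) (ξ (s + 2)))]
    ring
  set R : ℝ := (∑ s ∈ Finset.Ico t T, θ (s + 1) (ζ s))
      + (∑ s ∈ Finset.Ico t (T - 1), Ψ₁ (s + 1) (ζ s) (ζ (s + 1)))
      + ∑ s ∈ Finset.Ico t (T - 2), Ψ₂ (s + 1) (ζ s) (ζ (s + 2)) with hRdef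
  -- energy of z
  have hz : U T z
      = Ustar t (fun j : Fin t => z ⟨j.1, by have := j.2; omega⟩)
          (z ⟨t, h1⟩) (z ⟨t + 1, h2⟩) + R := by
    have := key z ζ hζ
    rw [this]
    have hhead : (fun j : Fin t => ζ j.1)
        = (fun j : Fin t => z ⟨j.1, by have := j.2; omega⟩) := by
      funext j
      exact hζ j.1 (by have := j.2; omega)
    rw [hhead, hζ t h1, hζ (t + 1) h2]
  -- energy of modified configurations
  have hw : ∀ u : Fin t → E,
      U T (fun j : Fin T => if hj : j.1 < t then u ⟨j.1, hj⟩ else z j)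
        = Ustar t u (z ⟨t, h1⟩) (z ⟨t + 1, h2⟩) + R := by
    intro u
    have hcompat : ∀ k (h : k < T),
        (fun n => if hn : n < t then u ⟨n, hn⟩ else ζ n) k
          = (fun j : Fin T => if hj : j.1 < t then u ⟨j.1, hj⟩ else z j) ⟨k, h⟩ := by
      intro k h
      by_cases hk : k < t
      · simp [hk]
      · simp [hk, hζ k h]
    rw [key _ _ hcompat]
    have hhead : (fun j : Fin t =>
        (fun n => if hn : n < t then u ⟨n, hn⟩ else ζ n) j.1) = u := by
      funext j
      simp [j.2]
    have he : ∀ k, t ≤ k → (if hn : k < t then u ⟨k, hn⟩ else ζ k) = ζ k :=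
      fun k hk => dif_neg (by omega)
    rw [hhead, he t le_rfl, he (t + 1) (by omega), hζ t h1, hζ (t + 1) h2]
    congr 1
    rw [hRdef]
    congr 1
    · congr 1
      · refine Finset.sum_congr rfl fun s hs => ?_
        rw [he s (Finset.mem_Ico.mp hs).1]
      · refine Finset.sum_congr rfl fun s hs => ?_
        have hts := (Finset.mem_Ico.mp hs).1
        rw [he s hts, he (s + 1) (by omega)]
    · refine Finset.sum_congr rfl fun s hs => ?_
      have hts := (Finset.mem_Ico.mp hs).1
      rw [he s hts, he (s + 2) (by omega)]
  -- positivity of the normalizing constant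
  have hCne : C ≠ 0 := by
    rw [hC]
    exact ne_of_gt (Finset.sum_pos (fun _ _ => Real.exp_pos _) Finset.univ_nonempty)
  -- final computation
  rw [hπ z, hz]
  rw [Finset.sum_congr rfl (fun u _ => by rw [hπ, hw u])]
  simp only [Real.exp_add]
  rw [← Finset.mul_sum, ← Finset.sum_mul,
    mul_div_mul_left _ _ (inv_ne_zero hCne),
    mul_div_mul_right _ _ (Real.exp_ne_zero R)]
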